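/- Let 0 < p < 1/2 and q = 1 − p. Let Q_k(z) be the polynomials defined by Q_{−1}(z) = 0, Q_0(z) = 1, and Q_k(z) = Q_{k−1}(z) − p q z² Q_{k−2}(z) + p^{k−1} z^k for k ≥ 1. Then for every real z with 0 < z < 1/(2√(pq)) and z ≠ 1, setting t = √(1 − 4 p q z²), u = ((1+t)/(2p))(−1 + 2p + t) and v = ((1−t)/(2p))(1 − 2p + t), one has for all k ≥ 0: Q_k(z) = (1/(2t(1−z))) [ u ((1+t)/2)^k + v ((1−t)/2)^k − 2 t z (p z)^k ]. -/

import Mathlib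

/-- Index-shifted numerator polynomials for the strong scenario:
`Qrec p z (k+1)` is the quantity `Q_k(z)` of the paper, so `Q_{-1}(z) = 0`,
`Q_0(z) = 1`, and `Q_k(z) = Q_{k-1}(z) - p(1-p) z² Q_{k-2}(z) + p^{k-1} z^k` for `k ≥ 1`. -/
noncomputable def Qrec (p z : ℝ) : ℕ → ℝ
  | 0 => 0
  | 1 => 1
  | (k + 2) => Qrec p z (k + 1) - p * (1 - p) * z ^ 2 * Qrec p z k + p ^ k * z ^ (k + 1)

/-- Explicit solution of the strong-scenario numerator recurrence: with
`t = √(1 - 4 p q z²)`, `u = ((1+t)/(2p))(-1+2p+t)`, `v = ((1-t)/(2p))(1-2p+t)`,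
`Q_k(z) = (1/(2t(1-z))) [u ((1+t)/2)^k + v ((1-t)/2)^k - 2 t z (p z)^k]` for all `k ≥ 0`. -/
theorem strong_Q_closed_form (p q : ℝ) (hp0 : 0 < p) (hp : p < 1 / 2) (hq : q = 1 - p)
    (z : ℝ) (hz0 : 0 < z) (hz1 : z < 1 / (2 * Real.sqrt (p * q))) (hz2 : z ≠ 1)
    (t u v : ℝ) (ht : t = Real.sqrt (1 - 4 * p * q * z ^ 2))
    (hu : u = (1 + t) / (2 * p) * (-1 + 2 * p + t))
    (hv : v = (1 - t) / (2 * p) * (1 - 2 * p + t)) :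
    ∀ k : ℕ,
      Qrec p z (k + 1) =
        1 / (2 * t * (1 - z)) *
          (u * ((1 + t) / 2) ^ k + v * ((1 - t) / 2) ^ k - 2 * t * z * (p * z) ^ k) := by
  have hq0 : 0 < q := by rw [hq]; linarith
  have hpq : 0 < p * q := mul_pos hp0 hq0
  have hsq : 0 < Real.sqrt (p * q) := Real.sqrt_pos.mpr hpq
  have hzz : 2 * Real.sqrt (p * q) * z < 1 := by
    rw [lt_div_iff₀ (by positivity)] at hz1; linarith
  have hs : 0 < 1 - 4 * p * q * z ^ 2 := by
    have h1 : (2 * Real.sqrt (p * q) * z) ^ 2 < 1 := by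
      have h0 : 0 < 2 * Real.sqrt (p * q) * z := by positivity
      nlinarith
    have h2 : (2 * Real.sqrt (p * q) * z) ^ 2 = 4 * p * q * z ^ 2 := by
      have := Real.sq_sqrt hpq.le
      ring_nf
      nlinarith [this]
    linarith [h1, h2 ▸ h1]
  have ht0 : 0 < t := ht ▸ Real.sqrt_pos.mpr hs
  have ht2 : t ^ 2 = 1 - 4 * p * q * z ^ 2 := by rw [ht, Real.sq_sqrt hs.le]
  have htne : t ≠ 0 := ht0.ne'
  have hpne : p ≠ 0 := hp0.ne'
  have hzne : 1 - z ≠ 0 := fun h => hz2 (by linarith)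
  have hA2 : ((1 + t) / 2) ^ 2 = (1 + t) / 2 - p * q * z ^ 2 := by linear_combination ht2 / 4
  have hB2 : ((1 - t) / 2) ^ 2 = (1 - t) / 2 - p * q * z ^ 2 := by linear_combination ht2 / 4
  have key : ∀ k : ℕ,
      Qrec p z (k + 1) =
        1 / (2 * t * (1 - z)) *
          (u * ((1 + t) / 2) ^ k + v * ((1 - t) / 2) ^ k - 2 * t * z * (p * z) ^ k) ∧
      Qrec p z (k + 2) =
        1 / (2 * t * (1 - z)) *
          (u * ((1 + t) / 2) ^ (k + 1) + v * ((1 - t) / 2) ^ (k + 1) -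
            2 * t * z * (p * z) ^ (k + 1)) := by
    intro k
    induction k with
    | zero =>
      constructor
      · show (1 : ℝ) = _
        subst hu hv
        field_simp
        ring
      · show Qrec p z 1 - p * (1 - p) * z ^ 2 * Qrec p z 0 + p ^ 0 * z ^ 1 = _
        show (1 : ℝ) - p * (1 - p) * z ^ 2 * 0 + p ^ 0 * z ^ 1 = _
        subst hu hv hq
        field_simp
        linear_combination (-t) * ht2
    | succ n ihn =>
      refine ⟨ihn.2, ?_⟩
      show Qrec p z (n + 2) - p * (1 - p) * z ^ 2 * Qrec p z (n + 1) + p ^ (n + 1) * z ^ (n + 2) = _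
      rw [ihn.1, ihn.2]
      have pA : ((1 + t) / 2) ^ (n + 2) = ((1 + t) / 2) ^ n * ((1 + t) / 2 - p * q * z ^ 2) := by
        rw [pow_add, hA2]
      have pB : ((1 - t) / 2) ^ (n + 2) = ((1 - t) / 2) ^ n * ((1 - t) / 2 - p * q * z ^ 2) := by
        rw [pow_add, hB2]
      have pC : (p * z) ^ (n + 2) = (p * z) ^ n * (p * z) ^ 2 := pow_add _ _ _
      have pA1 : ((1 + t) / 2) ^ (n + 1) = ((1 + t) / 2) ^ n * ((1 + t) / 2) := pow_succ _ _
      have pB1 : ((1 - t) / 2) ^ (n + 1) = ((1 - t) / 2) ^ n * ((1 - t) / 2) := pow_succ _ _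
      have pC1 : (p * z) ^ (n + 1) = (p * z) ^ n * (p * z) := pow_succ _ _
      have pD : p ^ (n + 1) * z ^ (n + 2) = (p * z) ^ n * (p * z ^ 2) := by
        rw [mul_pow]; ring
      rw [pA, pB, pC, pA1, pB1, pC1, pD]
      subst hq
      field_simp
      ring
  intro k
  exact (key k).1
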